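/- Let H be a complex Hilbert space and let A, P : H → H be continuous linear maps with A self-adjoint and P positive (i.e. P is self-adjoint and ⟨Px, x⟩ ≥ 0 for all x ∈ H). Then the spectrum of the composition A ∘ P is contained in the real axis: every λ in the ℂ-spectrum of A ∘ P satisfies Im λ = 0. -/

import Mathlib

open ContinuousLinearMap

/-- A composition (self-adjoint) ∘ (positive) of bounded operators on a complex
Hilbert space has real spectrum.  This is the mechanism behind (4.3.11)–(4.3.12),
(4.3.24), Proposition 4.3.5, (5.1.23)–(5.1.24) and (5.1.30)–(5.1.31). -/
theorem spectrum_selfAdjoint_comp_positive_real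
    {H : Type*} [NormedAddCommGroup H] [InnerProductSpace ℂ H] [CompleteSpace H]
    (A P : H →L[ℂ] H) (hA : IsSelfAdjoint A) (hP : P.IsPositive) :
    ∀ lam ∈ spectrum ℂ (A ∘L P), lam.im = 0 := by
  intro lam hlam
  by_cases h0 : lam = 0
  · simp [h0]
  · have hP0 : (0 : H →L[ℂ] H) ≤ P := P.nonneg_iff_isPositive.mpr hP
    set Q : H →L[ℂ] H := CFC.sqrt P with hQdef
    have hQ0 : (0 : H →L[ℂ] H) ≤ Q := CFC.sqrt_nonneg P
    have hQsa : IsSelfAdjoint Q := IsSelfAdjoint.of_nonneg hQ0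
    have hQQ : Q * Q = P := CFC.sqrt_mul_sqrt_self P hP0
    have hsa : IsSelfAdjoint (Q * A * Q) := by
      simpa [hQsa.star_eq] using hA.conjugate Q
    have key : lam ∈ spectrum ℂ (Q * A * Q) := by
      have h1 : lam ∈ spectrum ℂ ((A * Q) * Q) := by
        rw [show (A * Q) * Q = A ∘L P by rw [mul_assoc, hQQ]; rfl]
        exact hlam
      have h2 := spectrum.nonzero_mul_comm (𝕜 := ℂ) (A * Q) Q
      have : lam ∈ spectrum ℂ (Q * (A * Q)) := by
        have : lam ∈ spectrum ℂ ((A * Q) * Q) \ {0} := ⟨h1, h0⟩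
        rw [h2] at this
        exact this.1
      rwa [← mul_assoc] at this
    exact hsa.im_eq_zero_of_mem_spectrum key
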